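/- arXiv:1403.3788 — 2 statements merged into one kernel-verified Lean document; each statement's English description precedes it below -/
import Mathlib

section
/- Let N ≤ N_R be positive integers and let p(t, a) = Σ_{n=0}^∞ A_n(a) Σ_{m=0}^n binom(n,m) (−1)^m t^{N+n−m−1} e^{−t}/(N+n−m−1)! for t > 0 and a ∈ ℝ. Then for every t > 0 and a ∈ ℝ, a · ∂_a p^{(2)}(t, a) = ( −2 + N_R + (−4 + 4N + 2N_R + a − 2N·N_R − N·a)/t + (−4 + 6N + 2N_R + 2a − 3N·N_R − 3N·a + N²·N_R + N²·a − 2N²)/t² ) · p(t, a) + ( 3N − 4 + a − t + (−6 − 3N² + 9N)/t + (−4 + 8N − 5N² + N³)/t² ) · p^{(1)}(t, a) + ( −1 + 2N − N_R − a − t + (−2 − N² + 3N)/t ) · p^{(2)}(t, a), where ∂_a denotes the partial derivative with respect to a of the function a ↦ p^{(2)}(t, a). -/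
/-- Pochhammer symbol `(x)ₙ = x (x+1) ⋯ (x+n-1)`. -/
noncomputable def poch (x : ℝ) (n : ℕ) : ℝ := ∏ i ∈ Finset.range n, (x + i)

/-- `A_n(a) = ((N)_n/(N_R)_n) aⁿ/n!`. -/
noncomputable def Acoef (N NR : ℕ) (a : ℝ) (n : ℕ) : ℝ :=
  (poch N n / poch NR n) * a ^ n / (n.factorial : ℝ)

/-- The (normalized) ZF SNR density
`p(t,a) = Σ_n A_n(a) Σ_{m=0}^n C(n,m) (−1)^m t^{N+n−m−1} e^{−t}/(N+n−m−1)!`. -/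
noncomputable def pdfZF (N NR : ℕ) (t a : ℝ) : ℝ :=
  ∑' n : ℕ, Acoef N NR a n *
    ∑ m ∈ Finset.range (n + 1),
      (n.choose m : ℝ) * (-1 : ℝ) ^ m * t ^ (N + n - m - 1) * Real.exp (-t)
        / ((N + n - m - 1).factorial : ℝ)


open Real


/-- `φ k t = t^k e^{-t}/k!` for `k ≥ 0`, and `0` for `k < 0`. -/
noncomputable def phiZ (k : ℤ) (t : ℝ) : ℝ :=
  if 0 ≤ k then t ^ k.toNat * Real.exp (-t) / (k.toNat.factorial : ℝ) else 0

lemma phiZ_hasDerivAt (k : ℤ) (t : ℝ) :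
    HasDerivAt (fun t => phiZ k t) (phiZ (k - 1) t - phiZ k t) t := by
  rcases lt_trichotomy k 0 with hk | hk | hk
  · have h1 : ¬ (0 ≤ k) := by omega
    have h2 : ¬ (0 ≤ k - 1) := by omega
    simp only [phiZ, if_neg h1, if_neg h2, sub_zero]
    exact hasDerivAt_const t 0
  · subst hk
    have h2 : ¬ ((0:ℤ) ≤ 0 - 1) := by omega
    simp only [phiZ, if_pos le_rfl, if_neg h2, Int.toNat_zero, pow_zero, one_mul,
      Nat.factorial_zero, Nat.cast_one, div_one, zero_sub]
    simpa using (hasDerivAt_neg t).exp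
  · have h1 : (0:ℤ) ≤ k := le_of_lt hk
    have h2 : (0:ℤ) ≤ k - 1 := by omega
    obtain ⟨m, rfl⟩ : ∃ m : ℕ, k = (m : ℤ) + 1 := ⟨(k - 1).toNat, by omega⟩
    have h3 : ((m:ℤ) + 1).toNat = m + 1 := by omega
    have h4 : ((m:ℤ) + 1 - 1).toNat = m := by omega
    simp only [phiZ, if_pos h1, if_pos h2, h3, h4]
    have hexp : HasDerivAt (fun t : ℝ => Real.exp (-t)) (-Real.exp (-t)) t := by
      simpa using (hasDerivAt_neg t).exp
    have hpow : HasDerivAt (fun t : ℝ => t ^ (m + 1)) (((m:ℝ) + 1) * t ^ m) t := by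
      simpa using hasDerivAt_pow (m + 1) t
    have := (hpow.mul hexp).div_const ((m + 1).factorial : ℝ)
    refine this.congr_deriv ?_
    have hfac : ((m+1).factorial : ℝ) = ((m+1 : ℕ) : ℝ) * (m.factorial : ℝ) := by
      rw [Nat.factorial_succ]; push_cast; ring
    rw [hfac]
    field_simp
    push_cast
    ring

lemma phiZ_mul_t (k : ℤ) (t : ℝ) : t * phiZ k t = ((k : ℝ) + 1) * phiZ (k + 1) t := by
  rcases lt_trichotomy k (-1) with hk | hk | hk
  · have h1 : ¬ (0 ≤ k) := by omega
    have h2 : ¬ (0 ≤ k + 1) := by omega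
    simp [phiZ, if_neg h1, if_neg h2]
  · subst hk
    simp [phiZ]
  · have h1 : (0:ℤ) ≤ k := by omega
    have h2 : (0:ℤ) ≤ k + 1 := by omega
    obtain ⟨m, rfl⟩ : ∃ m : ℕ, k = (m : ℤ) := ⟨k.toNat, by omega⟩
    have h3 : ((m:ℤ)).toNat = m := by omega
    have h4 : ((m:ℤ) + 1).toNat = m + 1 := by omega
    simp only [phiZ, if_pos h1, if_pos h2, h3, h4]
    have hfac : ((m+1).factorial : ℝ) = ((m:ℝ) + 1) * (m.factorial : ℝ) := by
      rw [Nat.factorial_succ]; push_cast; ring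
    have hm : (m.factorial : ℝ) ≠ 0 := by positivity
    have hm1 : ((m:ℝ) + 1) ≠ 0 := by positivity
    rw [hfac]
    field_simp
    push_cast
    ring

lemma phiZ_abs_le (k : ℤ) (t : ℝ) : |phiZ k t| ≤ Real.exp (2 * |t|) := by
  unfold phiZ
  split_ifs with h
  · rw [abs_div, abs_mul, abs_pow, Nat.abs_cast]
    have h1 : |t| ^ k.toNat / (k.toNat.factorial : ℝ) ≤ Real.exp |t| :=
      Real.pow_div_factorial_le_exp (x := |t|) (abs_nonneg t) k.toNat
    have h2 : |Real.exp (-t)| ≤ Real.exp |t| := by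
      rw [abs_of_pos (Real.exp_pos _)]
      exact Real.exp_le_exp.2 (neg_le_abs t)
    calc |t| ^ k.toNat * |Real.exp (-t)| / (k.toNat.factorial : ℝ)
        = (|t| ^ k.toNat / (k.toNat.factorial : ℝ)) * |Real.exp (-t)| := by ring
      _ ≤ Real.exp |t| * Real.exp |t| := by
          apply mul_le_mul h1 h2 (abs_nonneg _) (le_of_lt (Real.exp_pos _))
      _ = Real.exp (2 * |t|) := by rw [← Real.exp_add]; ring_nf
  · simpa using le_of_lt (Real.exp_pos _)


noncomputable def hh (β : ℤ) (n : ℕ) (t : ℝ) : ℝ :=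
  ∑ m ∈ Finset.range (n + 1), (n.choose m : ℝ) * (-1 : ℝ) ^ m * phiZ (β + n - m) t

lemma phiZ_arg {a b : ℤ} (t : ℝ) (h : a = b) : phiZ a t = phiZ b t := by rw [h]

/-- Pascal: `h β (n+1) = h (β+1) n - h β n`. -/
lemma hh_pascal (β : ℤ) (n : ℕ) (t : ℝ) :
    hh β (n + 1) t = hh (β + 1) n t - hh β n t := by
  have step1 : hh β (n+1) t
      = (∑ k ∈ Finset.range (n+1),
          (-((n.choose k : ℝ) * (-1:ℝ)^k * phiZ (β + n - k) t)
            + (n.choose (k+1) : ℝ) * (-1:ℝ)^(k+1) * phiZ (β + n - k) t))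
        + phiZ (β + 1 + n) t := by
    unfold hh
    rw [Finset.sum_range_succ']
    congr 1
    · apply Finset.sum_congr rfl
      intro k _
      have h1 : ((n+1).choose (k+1) : ℝ) = (n.choose k : ℝ) + (n.choose (k+1) : ℝ) := by
        rw [Nat.choose_succ_succ]; push_cast; ring
      rw [h1, phiZ_arg t (show β + ((n+1:ℕ):ℤ) - ((k+1:ℕ):ℤ) = β + n - k by push_cast; ring),
        pow_succ]
      ring
    · rw [phiZ_arg t (show β + ((n+1:ℕ):ℤ) - ((0:ℕ):ℤ) = β + 1 + n by push_cast; ring)]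
      simp
  have step2 : ∑ k ∈ Finset.range (n+1), (n.choose (k+1) : ℝ) * (-1:ℝ)^(k+1) * phiZ (β + n - k) t
      = hh (β+1) n t - phiZ (β + 1 + n) t := by
    unfold hh
    rw [Finset.sum_range_succ' (fun m => (n.choose m : ℝ) * (-1:ℝ)^m * phiZ (β + 1 + n - m) t) n,
      Finset.sum_range_succ]
    have htop : (n.choose (n+1) : ℝ) = 0 := by
      rw [Nat.choose_eq_zero_of_lt (by omega)]; simp
    rw [htop]
    simp only [Nat.choose_zero_right, Nat.cast_one, pow_zero, one_mul, Nat.cast_zero,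
      sub_zero, zero_mul, mul_zero, add_zero]
    rw [add_sub_cancel_right]
    apply Finset.sum_congr rfl
    intro k _
    rw [phiZ_arg t (show β + 1 + (n:ℤ) - ((k+1:ℕ):ℤ) = β + n - k by push_cast; ring)]
  rw [step1, Finset.sum_add_distrib, step2, Finset.sum_neg_distrib]
  unfold hh
  ring


/-- The contiguous recurrence `(β+n+1) h(β+1,n) = (t+β) h(β,n) - t h(β-1,n)`. -/
lemma hh_rec (β : ℤ) (n : ℕ) (t : ℝ) :
    ((β:ℝ) + n + 1) * hh (β + 1) n t = (t + β) * hh β n t - t * hh (β - 1) n t := by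
  have key : ∑ m ∈ Finset.range (n+1), (n.choose m : ℝ) * (-1:ℝ)^m *
      ((m:ℝ) * phiZ (β + 1 + n - m) t + ((n:ℝ) - m) * phiZ (β + n - m) t) = 0 := by
    simp only [mul_add]
    rw [Finset.sum_add_distrib]
    have hU : ∑ m ∈ Finset.range (n+1), (n.choose m : ℝ) * (-1:ℝ)^m *
        ((m:ℝ) * phiZ (β + 1 + n - m) t)
        = ∑ k ∈ Finset.range n, -((n.choose k : ℝ) * (-1:ℝ)^k *
            (((n:ℝ) - k) * phiZ (β + n - k) t)) := by
      rw [Finset.sum_range_succ']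
      simp only [Nat.cast_zero, zero_mul, mul_zero, add_zero]
      apply Finset.sum_congr rfl
      intro k hk
      have hkn : k < n := Finset.mem_range.1 hk
      have hch : (n.choose (k+1) : ℝ) * ((k:ℝ) + 1) = (n.choose k : ℝ) * ((n:ℝ) - k) := by
        have := Nat.choose_succ_right_eq n k
        have hcast : ((n.choose (k+1) * (k+1) : ℕ) : ℝ) = ((n.choose k * (n - k) : ℕ) : ℝ) := by
          exact_mod_cast congrArg (Nat.cast : ℕ → ℝ) this
        push_cast [Nat.cast_sub (le_of_lt hkn)] at hcast
        linarith [hcast]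
      rw [phiZ_arg t (show β + 1 + (n:ℤ) - ((k+1:ℕ):ℤ) = β + n - k by push_cast; ring)]
      push_cast
      rw [pow_succ]
      linear_combination (-(-1:ℝ)^k * phiZ (β + (n:ℤ) - (k:ℤ)) t) * hch
    rw [hU, Finset.sum_range_succ, ← add_assoc, ← Finset.sum_add_distrib]
    simp
  rw [← sub_eq_zero]
  have expand : ((β:ℝ) + n + 1) * hh (β + 1) n t - ((t + β) * hh β n t - t * hh (β - 1) n t)
      = ∑ m ∈ Finset.range (n+1), (n.choose m : ℝ) * (-1:ℝ)^m *
          ((m:ℝ) * phiZ (β + 1 + n - m) t + ((n:ℝ) - m) * phiZ (β + n - m) t) := by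
    unfold hh
    simp only [Finset.mul_sum]
    rw [← Finset.sum_sub_distrib, ← Finset.sum_sub_distrib]
    apply Finset.sum_congr rfl
    intro m _
    have e1 : t * phiZ (β + n - m) t = ((β:ℝ) + n - m + 1) * phiZ (β + 1 + n - m) t := by
      rw [phiZ_mul_t (β + n - m) t, phiZ_arg t (show β + (n:ℤ) - m + 1 = β + 1 + n - m by ring)]
      push_cast; ring_nf
    have e2 : t * phiZ (β - 1 + n - m) t = ((β:ℝ) + n - m) * phiZ (β + n - m) t := by
      rw [phiZ_mul_t (β - 1 + n - m) t, phiZ_arg t (show β - 1 + (n:ℤ) - m + 1 = β + n - m by ring)]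
      push_cast; ring_nf
    calc ((β:ℝ) + n + 1) * ((n.choose m : ℝ) * (-1:ℝ)^m * phiZ (β + 1 + n - m) t)
        - ((t + β) * ((n.choose m : ℝ) * (-1:ℝ)^m * phiZ (β + n - m) t)
          - t * ((n.choose m : ℝ) * (-1:ℝ)^m * phiZ (β - 1 + n - m) t))
        = (n.choose m : ℝ) * (-1:ℝ)^m *
            (((β:ℝ) + n + 1) * phiZ (β + 1 + n - m) t - (t * phiZ (β + n - m) t)
              - (β:ℝ) * phiZ (β + n - m) t + t * phiZ (β - 1 + n - m) t) := by ring
      _ = (n.choose m : ℝ) * (-1:ℝ)^m *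
          ((m:ℝ) * phiZ (β + 1 + n - m) t + ((n:ℝ) - m) * phiZ (β + n - m) t) := by
          rw [e1, e2]; ring
  rw [expand, key]


lemma hh_hasDerivAt (β : ℤ) (n : ℕ) (t : ℝ) :
    HasDerivAt (fun t => hh β n t) (hh (β - 1) n t - hh β n t) t := by
  have h : HasDerivAt
      (fun t => ∑ m ∈ Finset.range (n + 1), (n.choose m : ℝ) * (-1 : ℝ) ^ m * phiZ (β + n - m) t)
      (∑ m ∈ Finset.range (n + 1),
        (n.choose m : ℝ) * (-1 : ℝ) ^ m * (phiZ (β + n - m - 1) t - phiZ (β + n - m) t)) t :=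
    HasDerivAt.fun_sum fun m _ => (phiZ_hasDerivAt (β + n - m) t).const_mul _
  unfold hh
  convert h using 1
  rw [← Finset.sum_sub_distrib]
  apply Finset.sum_congr rfl
  intro m _
  rw [phiZ_arg t (show β - 1 + (n:ℤ) - m = β + n - m - 1 by ring)]
  ring

lemma hh_abs_le (β : ℤ) (n : ℕ) (t : ℝ) : |hh β n t| ≤ 2 ^ n * Real.exp (2 * |t|) := by
  unfold hh
  calc |∑ m ∈ Finset.range (n + 1), (n.choose m : ℝ) * (-1 : ℝ) ^ m * phiZ (β + n - m) t|
      ≤ ∑ m ∈ Finset.range (n + 1), |(n.choose m : ℝ) * (-1 : ℝ) ^ m * phiZ (β + n - m) t| :=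
        Finset.abs_sum_le_sum_abs _ _
    _ ≤ ∑ m ∈ Finset.range (n + 1), (n.choose m : ℝ) * Real.exp (2 * |t|) := by
        apply Finset.sum_le_sum
        intro m _
        rw [abs_mul, abs_mul, abs_pow, abs_neg, abs_one, one_pow, mul_one, Nat.abs_cast]
        exact mul_le_mul_of_nonneg_left (phiZ_abs_le _ _) (Nat.cast_nonneg _)
    _ = 2 ^ n * Real.exp (2 * |t|) := by
        rw [← Finset.sum_mul]
        congr 1
        rw [← Nat.cast_sum, Nat.sum_range_choose]
        push_cast; ring

lemma poch_pos {N : ℕ} (hN : 0 < N) (n : ℕ) : 0 < poch N n :=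
  Finset.prod_pos fun i _ => by push_cast; positivity

lemma poch_le {N NR : ℕ} (hN : 0 < N) (hNNR : N ≤ NR) (n : ℕ) : poch N n ≤ poch NR n := by
  apply Finset.prod_le_prod
  · intro i _; positivity
  · intro i _
    have : (N:ℝ) ≤ NR := Nat.cast_le.2 hNNR
    linarith

lemma ratio_bound {N NR : ℕ} (hN : 0 < N) (hNNR : N ≤ NR) (n : ℕ) :
    |poch N n / poch NR n| ≤ 1 := by
  have h1 := poch_pos hN n
  have h2 := poch_pos (lt_of_lt_of_le hN hNNR) n
  rw [abs_div, abs_of_pos h1, abs_of_pos h2, div_le_one h2]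
  exact poch_le hN hNNR n

lemma Acoef_abs_le {N NR : ℕ} (hN : 0 < N) (hNNR : N ≤ NR) (a : ℝ) (n : ℕ) :
    |Acoef N NR a n| ≤ |a| ^ n / (n.factorial : ℝ) := by
  unfold Acoef
  rw [abs_div, abs_mul, abs_pow, Nat.abs_cast]
  gcongr
  calc |poch (↑N) n / poch (↑NR) n| * |a| ^ n ≤ 1 * |a| ^ n := by
        gcongr; exact ratio_bound hN hNNR n
    _ = |a| ^ n := one_mul _

lemma Acoef_hasDerivAt (N NR : ℕ) (a : ℝ) (n : ℕ) :
    HasDerivAt (fun a' => Acoef N NR a' n)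
      ((poch N n / poch NR n) * ((n:ℝ) * a ^ (n - 1)) / (n.factorial : ℝ)) a := by
  unfold Acoef
  exact (((hasDerivAt_pow n a).const_mul (poch N n / poch NR n)).div_const _)

lemma a_mul_Aderiv (N NR : ℕ) (a : ℝ) (n : ℕ) :
    a * ((poch N n / poch NR n) * ((n:ℝ) * a ^ (n - 1)) / (n.factorial : ℝ))
      = (n : ℝ) * Acoef N NR a n := by
  unfold Acoef
  rcases n with _ | k
  · simp
  · have h : k + 1 - 1 = k := rfl
    rw [h, pow_succ]
    ring

lemma Acoef_rec {N NR : ℕ} (hN : 0 < N) (hNNR : N ≤ NR) (a : ℝ) (n : ℕ) :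
    ((NR:ℝ) + n) * ((n:ℝ) + 1) * Acoef N NR a (n+1) = ((N:ℝ) + n) * a * Acoef N NR a n := by
  unfold Acoef poch
  rw [Finset.prod_range_succ, Finset.prod_range_succ, Nat.factorial_succ]
  have h2 : (0:ℝ) < ∏ i ∈ Finset.range n, ((NR:ℝ) + i) := poch_pos (lt_of_lt_of_le hN hNNR) n
  have h3 : ((NR:ℝ) + n) > 0 := by
    have : (1:ℝ) ≤ NR := by exact_mod_cast Nat.one_le_iff_ne_zero.2 (by omega)
    positivity
  have h4 : (n.factorial : ℝ) ≠ 0 := by positivity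
  field_simp
  push_cast
  ring

lemma summable_master (x : ℝ) :
    Summable (fun n : ℕ => ((n:ℝ)+1)^2 * x^n / (n.factorial : ℝ)) := by
  apply Summable.of_norm_bounded (Real.summable_pow_div_factorial (4*|x|))
  intro n
  have h1 : ((n:ℝ)+1) ≤ 2^n := by
    have := Nat.lt_two_pow_self (n := n)
    exact_mod_cast Nat.succ_le_of_lt this
  have h2 : ((n:ℝ)+1)^2 ≤ 4^n := by
    calc ((n:ℝ)+1)^2 ≤ ((2:ℝ)^n)^2 := by gcongr
      _ = 4^n := by rw [← pow_mul, mul_comm, pow_mul]; norm_num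
  rw [Real.norm_eq_abs, abs_div, abs_mul, abs_pow, abs_pow]
  have h3 : |(n:ℝ)+1| = (n:ℝ)+1 := abs_of_pos (by positivity)
  rw [h3, Nat.abs_cast]
  rw [div_le_div_iff₀ (by positivity) (by positivity)]
  calc ((n:ℝ)+1)^2 * |x|^n * (n.factorial:ℝ) ≤ 4^n * |x|^n * (n.factorial:ℝ) := by gcongr
    _ = (4*|x|)^n * (n.factorial:ℝ) := by rw [mul_pow]

lemma summable_of_bound (f : ℕ → ℝ) (K x : ℝ)
    (hf : ∀ n, |f n| ≤ K * (((n:ℝ)+1)^2 * x^n / (n.factorial : ℝ))) : Summable f :=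
  Summable.of_norm_bounded ((summable_master x).mul_left K) hf



lemma hh_arg {a b : ℤ} (n : ℕ) (t : ℝ) (h : a = b) : hh a n t = hh b n t := by rw [h]

noncomputable def gg0 (N n : ℕ) (t : ℝ) : ℝ := hh ((N:ℤ) - 1) n t
noncomputable def gg1 (N n : ℕ) (t : ℝ) : ℝ := hh ((N:ℤ) - 2) n t - hh ((N:ℤ) - 1) n t
noncomputable def gg2 (N n : ℕ) (t : ℝ) : ℝ :=
  hh ((N:ℤ) - 3) n t - 2 * hh ((N:ℤ) - 2) n t + hh ((N:ℤ) - 1) n t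

lemma gg0_hasDerivAt (N n : ℕ) (t : ℝ) :
    HasDerivAt (fun t => gg0 N n t) (gg1 N n t) t := by
  have h := hh_hasDerivAt ((N:ℤ) - 1) n t
  unfold gg0 gg1
  rw [hh_arg n t (show (N:ℤ) - 2 = (N:ℤ) - 1 - 1 by ring)]
  exact h

lemma gg1_hasDerivAt (N n : ℕ) (t : ℝ) :
    HasDerivAt (fun t => gg1 N n t) (gg2 N n t) t := by
  have h := (hh_hasDerivAt ((N:ℤ) - 2) n t).fun_sub (hh_hasDerivAt ((N:ℤ) - 1) n t)
  unfold gg1 gg2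
  refine h.congr_deriv ?_
  rw [hh_arg n t (show (N:ℤ) - 2 - 1 = (N:ℤ) - 3 by ring),
    hh_arg n t (show (N:ℤ) - 1 - 1 = (N:ℤ) - 2 by ring)]
  ring

lemma gg0_abs_le (N n : ℕ) (t : ℝ) : |gg0 N n t| ≤ 4 * 2 ^ n * Real.exp (2 * |t|) := by
  have h := hh_abs_le ((N:ℤ) - 1) n t
  have hp : (0:ℝ) < 2 ^ n * Real.exp (2 * |t|) := by positivity
  unfold gg0; nlinarith

lemma gg1_abs_le (N n : ℕ) (t : ℝ) : |gg1 N n t| ≤ 4 * 2 ^ n * Real.exp (2 * |t|) := by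
  have h1 := hh_abs_le ((N:ℤ) - 2) n t
  have h2 := hh_abs_le ((N:ℤ) - 1) n t
  have hp : (0:ℝ) < 2 ^ n * Real.exp (2 * |t|) := by positivity
  unfold gg1
  calc |hh ((N:ℤ) - 2) n t - hh ((N:ℤ) - 1) n t|
      ≤ |hh ((N:ℤ) - 2) n t| + |hh ((N:ℤ) - 1) n t| := abs_sub _ _
    _ ≤ 4 * 2 ^ n * Real.exp (2 * |t|) := by nlinarith

lemma gg2_abs_le (N n : ℕ) (t : ℝ) : |gg2 N n t| ≤ 4 * 2 ^ n * Real.exp (2 * |t|) := by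
  have h1 := hh_abs_le ((N:ℤ) - 3) n t
  have h2 := hh_abs_le ((N:ℤ) - 2) n t
  have h3 := hh_abs_le ((N:ℤ) - 1) n t
  have hp : (0:ℝ) < 2 ^ n * Real.exp (2 * |t|) := by positivity
  unfold gg2
  calc |hh ((N:ℤ) - 3) n t - 2 * hh ((N:ℤ) - 2) n t + hh ((N:ℤ) - 1) n t|
      ≤ |hh ((N:ℤ) - 3) n t - 2 * hh ((N:ℤ) - 2) n t| + |hh ((N:ℤ) - 1) n t| := abs_add_le _ _
    _ ≤ |hh ((N:ℤ) - 3) n t| + |2 * hh ((N:ℤ) - 2) n t| + |hh ((N:ℤ) - 1) n t| := by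
        have := abs_sub (hh ((N:ℤ) - 3) n t) (2 * hh ((N:ℤ) - 2) n t)
        linarith
    _ ≤ 4 * 2 ^ n * Real.exp (2 * |t|) := by
        rw [abs_mul]
        simp only [abs_two]
        nlinarith

lemma rel1 {N : ℕ} (hN : 0 < N) (n : ℕ) (t : ℝ) :
    t * gg2 N n t + (t + 2 - (N:ℝ)) * gg1 N n t + ((n:ℝ) + 1) * gg0 N n t = 0 := by
  have h := hh_rec ((N:ℤ) - 2) n t
  rw [hh_arg n t (show (N:ℤ) - 2 + 1 = (N:ℤ) - 1 by ring),
    hh_arg n t (show (N:ℤ) - 2 - 1 = (N:ℤ) - 3 by ring)] at h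
  push_cast at h
  unfold gg0 gg1 gg2
  linarith [h]

lemma rel2 {N : ℕ} (hN : 0 < N) (n : ℕ) (t : ℝ) :
    ((n:ℝ) + N) * gg0 N (n+1) t = -((n:ℝ) + 1) * gg0 N n t - t * gg1 N n t := by
  have hp := hh_pascal ((N:ℤ) - 1) n t
  rw [hh_arg n t (show (N:ℤ) - 1 + 1 = (N:ℤ) by ring)] at hp
  have hr := hh_rec ((N:ℤ) - 1) n t
  rw [hh_arg n t (show (N:ℤ) - 1 + 1 = (N:ℤ) by ring),
    hh_arg n t (show (N:ℤ) - 1 - 1 = (N:ℤ) - 2 by ring)] at hr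
  push_cast at hr
  unfold gg0 gg1
  rw [hp]
  linarith [hr]

lemma rel3 {N : ℕ} (hN : 0 < N) (n : ℕ) (t : ℝ) :
    ((n:ℝ) + N) * gg1 N (n+1) t = ((n:ℝ) + 1) * gg0 N n t - ((n:ℝ) + (N:ℝ) - t) * gg1 N n t := by
  have hp1 := hh_pascal ((N:ℤ) - 2) n t
  rw [hh_arg n t (show (N:ℤ) - 2 + 1 = (N:ℤ) - 1 by ring)] at hp1
  have hp2 := hh_pascal ((N:ℤ) - 1) n t
  rw [hh_arg n t (show (N:ℤ) - 1 + 1 = (N:ℤ) by ring)] at hp2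
  have hr := hh_rec ((N:ℤ) - 1) n t
  rw [hh_arg n t (show (N:ℤ) - 1 + 1 = (N:ℤ) by ring),
    hh_arg n t (show (N:ℤ) - 1 - 1 = (N:ℤ) - 2 by ring)] at hr
  push_cast at hr
  unfold gg0 gg1
  rw [hp1, hp2]
  linarith [hr]


/-! ### The telescoping certificate coefficients -/

noncomputable def cc0 (N NR : ℕ) (t : ℝ) : ℝ :=
  -2 + (NR:ℝ) + (-4 + 4 * (N:ℝ) + 2 * (NR:ℝ) - 2 * (N:ℝ) * (NR:ℝ)) / t
    + (-4 + 6 * (N:ℝ) + 2 * (NR:ℝ) - 3 * (N:ℝ) * (NR:ℝ) + (N:ℝ) ^ 2 * (NR:ℝ)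
        - 2 * (N:ℝ) ^ 2) / t ^ 2

noncomputable def cc1 (N NR : ℕ) (t : ℝ) : ℝ :=
  3 * (N:ℝ) - 4 - t + (-6 - 3 * (N:ℝ) ^ 2 + 9 * (N:ℝ)) / t
    + (-4 + 8 * (N:ℝ) - 5 * (N:ℝ) ^ 2 + (N:ℝ) ^ 3) / t ^ 2

noncomputable def cc2 (N NR : ℕ) (t : ℝ) : ℝ :=
  -1 + 2 * (N:ℝ) - (NR:ℝ) - t + (-2 - (N:ℝ) ^ 2 + 3 * (N:ℝ)) / t

noncomputable def sig1 (N NR : ℕ) (t x : ℝ) : ℝ :=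
  ((x - cc2 N NR t) * (x + 1)) / t + cc0 N NR t

noncomputable def sig2 (N NR : ℕ) (t x : ℝ) : ℝ :=
  ((x - cc2 N NR t) * (t + 2 - (N:ℝ))) / t + cc1 N NR t

noncomputable def SS (N NR : ℕ) (t a : ℝ) (n : ℕ) : ℝ :=
  Acoef N NR a n * (sig1 N NR t n * gg0 N n t + sig2 N NR t n * gg1 N n t)

/-- Per-index telescoping certificate (abstract algebraic form). -/
lemma keyident (Nr NRr t a x g0 g1 g2 H0 H1 An An1 : ℝ) (ht : t ≠ 0)
    (hxN : x + Nr ≠ 0) (hx1 : x + 1 ≠ 0) (hxNR : NRr + x ≠ 0)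
    (hR1 : t * g2 + (t + 2 - Nr) * g1 + (x + 1) * g0 = 0)
    (hR2 : (x + Nr) * H0 = -(x + 1) * g0 - t * g1)
    (hR3 : (x + Nr) * H1 = (x + 1) * g0 - (x + Nr - t) * g1)
    (hArec : (NRr + x) * (x + 1) * An1 = (Nr + x) * a * An) :
    x * An * g2
      - An * ((-2 + NRr
            + (-4 + 4 * Nr + 2 * NRr + a - 2 * Nr * NRr - Nr * a) / t
            + (-4 + 6 * Nr + 2 * NRr + 2 * a - 3 * Nr * NRr - 3 * Nr * a + Nr ^ 2 * NRr
                + Nr ^ 2 * a - 2 * Nr ^ 2) / t ^ 2) * g0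
          + (3 * Nr - 4 + a - t + (-6 - 3 * Nr ^ 2 + 9 * Nr) / t
              + (-4 + 8 * Nr - 5 * Nr ^ 2 + Nr ^ 3) / t ^ 2) * g1
          + (-1 + 2 * Nr - NRr - a - t + (-2 - Nr ^ 2 + 3 * Nr) / t) * g2)
      = An1 * ((((x + 1) - (-1 + 2 * Nr - NRr - t + (-2 - Nr ^ 2 + 3 * Nr) / t)) * ((x + 1) + 1) / t
            + (-2 + NRr + (-4 + 4 * Nr + 2 * NRr - 2 * Nr * NRr) / t
              + (-4 + 6 * Nr + 2 * NRr - 3 * Nr * NRr + Nr ^ 2 * NRr - 2 * Nr ^ 2) / t ^ 2)) * H0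
          + ((((x + 1) - (-1 + 2 * Nr - NRr - t + (-2 - Nr ^ 2 + 3 * Nr) / t)) * (t + 2 - Nr)) / t
            + (3 * Nr - 4 - t + (-6 - 3 * Nr ^ 2 + 9 * Nr) / t
              + (-4 + 8 * Nr - 5 * Nr ^ 2 + Nr ^ 3) / t ^ 2)) * H1)
        - An * (((x - (-1 + 2 * Nr - NRr - t + (-2 - Nr ^ 2 + 3 * Nr) / t)) * (x + 1) / t
            + (-2 + NRr + (-4 + 4 * Nr + 2 * NRr - 2 * Nr * NRr) / t
              + (-4 + 6 * Nr + 2 * NRr - 3 * Nr * NRr + Nr ^ 2 * NRr - 2 * Nr ^ 2) / t ^ 2)) * g0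
          + (((x - (-1 + 2 * Nr - NRr - t + (-2 - Nr ^ 2 + 3 * Nr) / t)) * (t + 2 - Nr)) / t
            + (3 * Nr - 4 - t + (-6 - 3 * Nr ^ 2 + 9 * Nr) / t
              + (-4 + 8 * Nr - 5 * Nr ^ 2 + Nr ^ 3) / t ^ 2)) * g1) := by
  have hg2 : g2 = (-(t + 2 - Nr) * g1 - (x + 1) * g0) / t := by
    field_simp; linarith [hR1]
  have hH0 : H0 = (-(x + 1) * g0 - t * g1) / (x + Nr) := by
    field_simp; linarith [hR2]
  have hH1 : H1 = ((x + 1) * g0 - (x + Nr - t) * g1) / (x + Nr) := by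
    field_simp; linarith [hR3]
  have hAn1 : An1 = (Nr + x) * a * An / ((NRr + x) * (x + 1)) := by
    field_simp; linarith [hArec]
  subst hg2 hH0 hH1 hAn1
  field_simp
  ring

/-- The concrete per-`n` telescoping identity. -/
lemma Ekey {N NR : ℕ} (hN : 0 < N) (hNNR : N ≤ NR) {t : ℝ} (ht : t ≠ 0) (a : ℝ) (n : ℕ) :
    (n:ℝ) * Acoef N NR a n * gg2 N n t
      - Acoef N NR a n * ((-2 + (NR:ℝ)
            + (-4 + 4 * (N:ℝ) + 2 * (NR:ℝ) + a - 2 * (N:ℝ) * (NR:ℝ) - (N:ℝ) * a) / t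
            + (-4 + 6 * (N:ℝ) + 2 * (NR:ℝ) + 2 * a - 3 * (N:ℝ) * (NR:ℝ)
                - 3 * (N:ℝ) * a + (N:ℝ) ^ 2 * (NR:ℝ) + (N:ℝ) ^ 2 * a
                - 2 * (N:ℝ) ^ 2) / t ^ 2) * gg0 N n t
          + (3 * (N:ℝ) - 4 + a - t + (-6 - 3 * (N:ℝ) ^ 2 + 9 * (N:ℝ)) / t
              + (-4 + 8 * (N:ℝ) - 5 * (N:ℝ) ^ 2 + (N:ℝ) ^ 3) / t ^ 2) * gg1 N n t
          + (-1 + 2 * (N:ℝ) - (NR:ℝ) - a - t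
              + (-2 - (N:ℝ) ^ 2 + 3 * (N:ℝ)) / t) * gg2 N n t)
      = SS N NR t a (n + 1) - SS N NR t a n := by
  have hxN : (n:ℝ) + (N:ℝ) ≠ 0 := by
    have : (1:ℝ) ≤ (N:ℝ) := by exact_mod_cast hN
    positivity
  have hx1 : (n:ℝ) + 1 ≠ 0 := by positivity
  have hxNR : (NR:ℝ) + (n:ℝ) ≠ 0 := by
    have : (1:ℝ) ≤ (NR:ℝ) := by exact_mod_cast (lt_of_lt_of_le hN hNNR)
    positivity
  have h := keyident (N:ℝ) (NR:ℝ) t a (n:ℝ) (gg0 N n t) (gg1 N n t) (gg2 N n t)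
      (gg0 N (n+1) t) (gg1 N (n+1) t) (Acoef N NR a n) (Acoef N NR a (n+1)) ht hxN hx1 hxNR
      (rel1 hN n t) (rel2 hN n t) (rel3 hN n t) (Acoef_rec hN hNNR a n)
  unfold SS sig1 sig2 cc0 cc1 cc2
  push_cast
  linear_combination h

/-- `S_0 = 0`. -/
lemma SS_zero {N NR : ℕ} (hN : 0 < N) {t : ℝ} (ht : t ≠ 0) (a : ℝ) :
    SS N NR t a 0 = 0 := by
  have hg0 : gg0 N 0 t = phiZ ((N:ℤ) - 1) t := by
    unfold gg0 hh
    simp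
  have hg1 : gg1 N 0 t = phiZ ((N:ℤ) - 2) t - phiZ ((N:ℤ) - 1) t := by
    unfold gg1 hh
    simp
  have hrel : t * phiZ ((N:ℤ) - 2) t = ((N:ℝ) - 1) * phiZ ((N:ℤ) - 1) t := by
    have := phiZ_mul_t ((N:ℤ) - 2) t
    rw [phiZ_arg t (show (N:ℤ) - 2 + 1 = (N:ℤ) - 1 by ring)] at this
    push_cast at this
    convert this using 2
    ring
  have hy : phiZ ((N:ℤ) - 2) t = ((N:ℝ) - 1) * phiZ ((N:ℤ) - 1) t / t := by
    field_simp; linarith [hrel]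
  unfold SS sig1 sig2 cc0 cc1 cc2
  rw [hg0, hg1, hy]
  have hA : Acoef N NR a 0 = 1 := by
    unfold Acoef poch
    simp
  rw [hA]
  push_cast
  field_simp
  ring

/-- Rewriting `pdfZF` through `gg0`. -/
lemma pdf_eq {N NR : ℕ} (hN : 0 < N) (t a : ℝ) :
    pdfZF N NR t a = ∑' n, Acoef N NR a n * gg0 N n t := by
  unfold pdfZF
  apply tsum_congr
  intro n
  congr 1
  unfold gg0 hh
  apply Finset.sum_congr rfl
  intro m hm
  have hm' : m ≤ n := by
    have := Finset.mem_range.1 hm; omega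
  have harg : (0:ℤ) ≤ (N:ℤ) - 1 + n - m := by omega
  have htn : ((N:ℤ) - 1 + n - m).toNat = N + n - m - 1 := by omega
  unfold phiZ
  rw [if_pos harg, htn]
  ring

/-! ### Summability and differentiation machinery -/

lemma Acoef_mul_bound {N NR : ℕ} (hN : 0 < N) (hNNR : N ≤ NR) (a X : ℝ) (n : ℕ) (c E : ℝ)
    (hc : 0 ≤ c) (hE : 0 ≤ E) (hX : |X| ≤ c * 2 ^ n * E) :
    |Acoef N NR a n * X|
      ≤ (c * E) * (((n:ℝ) + 1) ^ 2 * (2 * |a|) ^ n / (n.factorial : ℝ)) := by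
  rw [abs_mul]
  have h1 : |Acoef N NR a n| ≤ |a| ^ n / (n.factorial : ℝ) := Acoef_abs_le hN hNNR a n
  have h2 : (0:ℝ) < (n.factorial : ℝ) := by positivity
  calc |Acoef N NR a n| * |X| ≤ (|a| ^ n / (n.factorial : ℝ)) * (c * 2 ^ n * E) :=
        mul_le_mul h1 hX (abs_nonneg _) (by positivity)
    _ = (c * E) * ((2 ^ n * |a| ^ n) / (n.factorial : ℝ)) := by ring
    _ ≤ (c * E) * (((n:ℝ) + 1) ^ 2 * (2 * |a|) ^ n / (n.factorial : ℝ)) := by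
        have h1n : (1:ℝ) ≤ ((n:ℝ) + 1) ^ 2 := by nlinarith [Nat.cast_nonneg (α := ℝ) n]
        have hnum : 2 ^ n * |a| ^ n ≤ ((n:ℝ) + 1) ^ 2 * (2 * |a|) ^ n := by
          rw [mul_pow]
          nlinarith [mul_nonneg (pow_nonneg (show (0:ℝ) ≤ 2 by norm_num) n)
            (pow_nonneg (abs_nonneg a) n)]
        apply mul_le_mul_of_nonneg_left _ (by positivity : (0:ℝ) ≤ c * E)
        exact (div_le_div_iff_of_pos_right h2).mpr hnum

lemma summable_AW {N NR : ℕ} (hN : 0 < N) (hNNR : N ≤ NR) (a : ℝ) (c E : ℝ)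
    (hc : 0 ≤ c) (hE : 0 ≤ E) (W : ℕ → ℝ) (hW : ∀ n, |W n| ≤ c * 2 ^ n * E) :
    Summable (fun n => Acoef N NR a n * W n) :=
  summable_of_bound _ (c * E) (2 * |a|)
    (fun n => Acoef_mul_bound hN hNNR a (W n) n c E hc hE (hW n))

lemma mem_ball_self_abs (t : ℝ) : t ∈ Metric.ball (0:ℝ) (|t| + 1) := by
  simp only [Metric.mem_ball, Real.dist_eq, sub_zero]
  linarith [abs_nonneg t]

lemma abs_le_of_mem_ball {y t : ℝ} (hy : y ∈ Metric.ball (0:ℝ) (|t| + 1)) : |y| ≤ |t| + 1 := by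
  simp only [Metric.mem_ball, Real.dist_eq, sub_zero] at hy
  linarith

lemma tsum_hasDerivAt_t {N NR : ℕ} (hN : 0 < N) (hNNR : N ≤ NR) (a : ℝ)
    (W W' : ℕ → ℝ → ℝ) (c : ℝ) (hc : 0 ≤ c)
    (hW : ∀ n y, HasDerivAt (fun s => W n s) (W' n y) y)
    (hWb : ∀ n y, |W n y| ≤ c * 2 ^ n * Real.exp (2 * |y|))
    (hW'b : ∀ n y, |W' n y| ≤ c * 2 ^ n * Real.exp (2 * |y|)) (t : ℝ) :
    HasDerivAt (fun t' => ∑' n, Acoef N NR a n * W n t')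
      (∑' n, Acoef N NR a n * W' n t) t := by
  apply hasDerivAt_tsum_of_isPreconnected
    (u := fun n : ℕ => (c * Real.exp (2 * (|t| + 1))) * (((n:ℝ) + 1) ^ 2 * (2 * |a|) ^ n / (n.factorial : ℝ)))
    (((summable_master (2 * |a|)).mul_left _))
    Metric.isOpen_ball ((convex_ball (0:ℝ) (|t| + 1)).isPreconnected)
    (fun (n : ℕ) (y : ℝ) _ => (hW n y).const_mul _)
    ?bound (mem_ball_self_abs t) ?pt (mem_ball_self_abs t)
  case bound =>
    intro n y hy
    rw [Real.norm_eq_abs]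
    apply Acoef_mul_bound hN hNNR a _ n c _ hc (le_of_lt (Real.exp_pos _))
    calc |W' n y| ≤ c * 2 ^ n * Real.exp (2 * |y|) := hW'b n y
      _ ≤ c * 2 ^ n * Real.exp (2 * (|t| + 1)) := by
          have := abs_le_of_mem_ball hy
          have h2 : Real.exp (2 * |y|) ≤ Real.exp (2 * (|t| + 1)) :=
            Real.exp_le_exp.2 (by linarith)
          have h3 : (0:ℝ) ≤ c * 2 ^ n := by positivity
          exact mul_le_mul_of_nonneg_left h2 h3
  case pt =>
    exact summable_AW hN hNNR a c (Real.exp (2 * |t|)) hc (le_of_lt (Real.exp_pos _))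
      (fun n => W n t) (fun n => hWb n t)

lemma tsum_hasDerivAt_a {N NR : ℕ} (hN : 0 < N) (hNNR : N ≤ NR) (t a : ℝ) :
    HasDerivAt (fun a' => ∑' n, Acoef N NR a' n * gg2 N n t)
      (∑' n, ((poch N n / poch NR n) * ((n:ℝ) * a ^ (n - 1)) / (n.factorial : ℝ)) * gg2 N n t)
      a := by
  apply hasDerivAt_tsum_of_isPreconnected
    (u := fun n : ℕ => (4 * Real.exp (2 * |t|)) * (((n:ℝ) + 1) ^ 2 * (2 * (|a| + 1)) ^ n / (n.factorial : ℝ)))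
    (((summable_master (2 * (|a| + 1))).mul_left _))
    Metric.isOpen_ball ((convex_ball (0:ℝ) (|a| + 1)).isPreconnected)
    (fun (n : ℕ) (y : ℝ) _ => (Acoef_hasDerivAt N NR y n).mul_const (gg2 N n t))
    ?bound (mem_ball_self_abs a) ?pt (mem_ball_self_abs a)
  case bound =>
    intro n y hy
    rw [Real.norm_eq_abs, abs_mul]
    have hy' : |y| ≤ |a| + 1 := abs_le_of_mem_ball hy
    have hd : |poch N n / poch NR n * ((n:ℝ) * y ^ (n - 1)) / (n.factorial : ℝ)|
        ≤ (n:ℝ) * (|a| + 1) ^ (n - 1) / (n.factorial : ℝ) := by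
      rw [abs_div, abs_mul, abs_mul, Nat.abs_cast, Nat.abs_cast, abs_pow]
      have h1 : |poch (N:ℝ) n / poch (NR:ℝ) n| ≤ 1 := ratio_bound hN hNNR n
      have h2 : |y| ^ (n - 1) ≤ (|a| + 1) ^ (n - 1) :=
        pow_le_pow_left₀ (abs_nonneg y) hy' _
      have h3 : (0:ℝ) < (n.factorial : ℝ) := by positivity
      calc |poch (N:ℝ) n / poch (NR:ℝ) n| * ((n:ℝ) * |y| ^ (n - 1)) / (n.factorial : ℝ)
          ≤ 1 * ((n:ℝ) * (|a| + 1) ^ (n - 1)) / (n.factorial : ℝ) := by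
            gcongr
        _ = (n:ℝ) * (|a| + 1) ^ (n - 1) / (n.factorial : ℝ) := by ring
    calc |poch (N:ℝ) n / poch (NR:ℝ) n * ((n:ℝ) * y ^ (n - 1)) / (n.factorial : ℝ)| * |gg2 N n t|
        ≤ ((n:ℝ) * (|a| + 1) ^ (n - 1) / (n.factorial : ℝ)) * (4 * 2 ^ n * Real.exp (2 * |t|)) :=
          mul_le_mul hd (gg2_abs_le N n t) (abs_nonneg _) (by positivity)
      _ ≤ (4 * Real.exp (2 * |t|)) * (((n:ℝ) + 1) ^ 2 * (2 * (|a| + 1)) ^ n / (n.factorial : ℝ)) := by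
          have e1 : (|a| + 1) ^ (n - 1) ≤ (|a| + 1) ^ n :=
            pow_le_pow_right₀ (by linarith [abs_nonneg a]) (Nat.sub_le n 1)
          have e2 : (n:ℝ) ≤ ((n:ℝ) + 1) ^ 2 := by nlinarith [Nat.cast_nonneg (α := ℝ) n]
          have e3 : (0:ℝ) < (n.factorial : ℝ) := by positivity
          have e12 : (n:ℝ) * (|a| + 1) ^ (n - 1) ≤ ((n:ℝ) + 1) ^ 2 * (|a| + 1) ^ n :=
            mul_le_mul e2 e1 (by positivity) (by positivity)
          have lhs_eq : ((n:ℝ) * (|a| + 1) ^ (n - 1) / (n.factorial : ℝ)) * (4 * 2 ^ n * Real.exp (2 * |t|))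
              = ((n:ℝ) * (|a| + 1) ^ (n - 1) * (4 * 2 ^ n * Real.exp (2 * |t|))) / (n.factorial : ℝ) := by
            ring
          have rhs_eq : (4 * Real.exp (2 * |t|)) * (((n:ℝ) + 1) ^ 2 * (2 * (|a| + 1)) ^ n / (n.factorial : ℝ))
              = (4 * Real.exp (2 * |t|) * (((n:ℝ) + 1) ^ 2 * (2 * (|a| + 1)) ^ n)) / (n.factorial : ℝ) := by
            ring
          rw [lhs_eq, rhs_eq, mul_pow]
          apply (div_le_div_iff_of_pos_right e3).mpr
          nlinarith [mul_le_mul_of_nonneg_right e12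
            (show (0:ℝ) ≤ 4 * 2 ^ n * Real.exp (2 * |t|) by positivity)]
  case pt =>
    exact summable_AW hN hNNR a 4 (Real.exp (2 * |t|)) (by norm_num)
      (le_of_lt (Real.exp_pos _)) (fun n => gg2 N n t) (fun n => gg2_abs_le N n t)



lemma sig1_bound (N NR : ℕ) {t : ℝ} (ht : t ≠ 0) (K : ℕ) :
    |sig1 N NR t K| ≤ ((1 + |cc2 N NR t|) / |t| + |cc0 N NR t|) * ((K:ℝ) + 1) ^ 2 := by
  have habs : (0:ℝ) < |t| := abs_pos.2 ht
  have h0 : (0:ℝ) ≤ (K:ℝ) := Nat.cast_nonneg K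
  have h1 : |(K:ℝ) - cc2 N NR t| ≤ (1 + |cc2 N NR t|) * ((K:ℝ) + 1) := by
    have h2 := abs_sub (K:ℝ) (cc2 N NR t)
    have h3 : |(K:ℝ)| = (K:ℝ) := abs_of_nonneg h0
    nlinarith [abs_nonneg (cc2 N NR t)]
  unfold sig1
  calc |((K:ℝ) - cc2 N NR t) * ((K:ℝ) + 1) / t + cc0 N NR t|
      ≤ |((K:ℝ) - cc2 N NR t) * ((K:ℝ) + 1) / t| + |cc0 N NR t| := abs_add_le _ _
    _ = |(K:ℝ) - cc2 N NR t| * ((K:ℝ) + 1) / |t| + |cc0 N NR t| := by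
        rw [abs_div, abs_mul, abs_of_pos (show (0:ℝ) < (K:ℝ) + 1 by linarith)]
    _ ≤ (1 + |cc2 N NR t|) * ((K:ℝ) + 1) * ((K:ℝ) + 1) / |t|
        + |cc0 N NR t| * ((K:ℝ) + 1) ^ 2 := by
        apply add_le_add
        · exact (div_le_div_iff_of_pos_right habs).mpr
            (mul_le_mul_of_nonneg_right h1 (by linarith))
        · nlinarith [mul_nonneg (abs_nonneg (cc0 N NR t))
            (show (0:ℝ) ≤ (K:ℝ)^2 + 2*(K:ℝ) by positivity)]
    _ = ((1 + |cc2 N NR t|) / |t| + |cc0 N NR t|) * ((K:ℝ) + 1) ^ 2 := by ring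

lemma sig2_bound (N NR : ℕ) {t : ℝ} (ht : t ≠ 0) (K : ℕ) :
    |sig2 N NR t K| ≤ ((1 + |cc2 N NR t|) * |t + 2 - (N:ℝ)| / |t| + |cc1 N NR t|) * ((K:ℝ) + 1) ^ 2 := by
  have habs : (0:ℝ) < |t| := abs_pos.2 ht
  have h0 : (0:ℝ) ≤ (K:ℝ) := Nat.cast_nonneg K
  have h1 : |(K:ℝ) - cc2 N NR t| ≤ (1 + |cc2 N NR t|) * ((K:ℝ) + 1) := by
    have h2 := abs_sub (K:ℝ) (cc2 N NR t)
    have h3 : |(K:ℝ)| = (K:ℝ) := abs_of_nonneg h0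
    nlinarith [abs_nonneg (cc2 N NR t)]
  unfold sig2
  calc |((K:ℝ) - cc2 N NR t) * (t + 2 - (N:ℝ)) / t + cc1 N NR t|
      ≤ |((K:ℝ) - cc2 N NR t) * (t + 2 - (N:ℝ)) / t| + |cc1 N NR t| := abs_add_le _ _
    _ = |(K:ℝ) - cc2 N NR t| * |t + 2 - (N:ℝ)| / |t| + |cc1 N NR t| := by
        rw [abs_div, abs_mul]
    _ ≤ ((1 + |cc2 N NR t|) * ((K:ℝ) + 1)) * |t + 2 - (N:ℝ)| / |t|
        + |cc1 N NR t| * ((K:ℝ) + 1) ^ 2 := by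
        apply add_le_add
        · exact (div_le_div_iff_of_pos_right habs).mpr
            (mul_le_mul_of_nonneg_right h1 (abs_nonneg _))
        · nlinarith [mul_nonneg (abs_nonneg (cc1 N NR t))
            (show (0:ℝ) ≤ (K:ℝ)^2 + 2*(K:ℝ) by positivity)]
    _ ≤ ((1 + |cc2 N NR t|) * |t + 2 - (N:ℝ)| / |t| + |cc1 N NR t|) * ((K:ℝ) + 1) ^ 2 := by
        have e1 : ((K:ℝ) + 1) ≤ ((K:ℝ) + 1) ^ 2 := by nlinarith
        have e2 : (0:ℝ) ≤ (1 + |cc2 N NR t|) * |t + 2 - (N:ℝ)| := by positivity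
        have e3 : ((1 + |cc2 N NR t|) * ((K:ℝ) + 1)) * |t + 2 - (N:ℝ)|
            ≤ (1 + |cc2 N NR t|) * |t + 2 - (N:ℝ)| * ((K:ℝ) + 1) ^ 2 := by
          nlinarith [abs_nonneg (cc2 N NR t), abs_nonneg (t + 2 - (N:ℝ))]
        have e4 : ((1 + |cc2 N NR t|) * ((K:ℝ) + 1)) * |t + 2 - (N:ℝ)| / |t|
            ≤ (1 + |cc2 N NR t|) * |t + 2 - (N:ℝ)| / |t| * ((K:ℝ) + 1) ^ 2 := by
          rw [div_mul_eq_mul_div]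
          exact (div_le_div_iff_of_pos_right habs).mpr e3
        nlinarith [e4, mul_nonneg (abs_nonneg (cc1 N NR t))
          (show (0:ℝ) ≤ (K:ℝ)^2 + 2*(K:ℝ) by positivity)]

lemma SS_bound {N NR : ℕ} (hN : 0 < N) (hNNR : N ≤ NR) {t : ℝ} (ht : t ≠ 0) (a : ℝ) (K : ℕ) :
    ‖SS N NR t a K‖ ≤ ((((1 + |cc2 N NR t|) / |t| + |cc0 N NR t|)
        + ((1 + |cc2 N NR t|) * |t + 2 - (N:ℝ)| / |t| + |cc1 N NR t|)) * (4 * Real.exp (2 * |t|)))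
      * (((K:ℝ) + 1) ^ 2 * (2 * |a|) ^ K / (K.factorial : ℝ)) := by
  set M1 := (1 + |cc2 N NR t|) / |t| + |cc0 N NR t| with hM1
  set M2 := (1 + |cc2 N NR t|) * |t + 2 - (N:ℝ)| / |t| + |cc1 N NR t| with hM2
  have hM1p : 0 ≤ M1 := by rw [hM1]; positivity
  have hM2p : 0 ≤ M2 := by rw [hM2]; positivity
  have hs1 := sig1_bound N NR ht K
  have hs2 := sig2_bound N NR ht K
  have hg0 := gg0_abs_le N K t
  have hg1 := gg1_abs_le N K t
  rw [Real.norm_eq_abs]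
  unfold SS
  rw [abs_mul]
  calc |Acoef N NR a K| * |sig1 N NR t K * gg0 N K t + sig2 N NR t K * gg1 N K t|
      ≤ (|a| ^ K / (K.factorial : ℝ))
        * ((M1 * ((K:ℝ) + 1) ^ 2) * (4 * 2 ^ K * Real.exp (2 * |t|))
          + (M2 * ((K:ℝ) + 1) ^ 2) * (4 * 2 ^ K * Real.exp (2 * |t|))) := by
        apply mul_le_mul (Acoef_abs_le hN hNNR a K) ?_ (abs_nonneg _) (by positivity)
        calc |sig1 N NR t K * gg0 N K t + sig2 N NR t K * gg1 N K t|
            ≤ |sig1 N NR t K| * |gg0 N K t| + |sig2 N NR t K| * |gg1 N K t| := by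
              calc _ ≤ |sig1 N NR t K * gg0 N K t| + |sig2 N NR t K * gg1 N K t| := abs_add_le _ _
                _ = _ := by rw [abs_mul, abs_mul]
          _ ≤ (M1 * ((K:ℝ) + 1) ^ 2) * (4 * 2 ^ K * Real.exp (2 * |t|))
              + (M2 * ((K:ℝ) + 1) ^ 2) * (4 * 2 ^ K * Real.exp (2 * |t|)) :=
            add_le_add (mul_le_mul hs1 hg0 (abs_nonneg _) (by positivity))
              (mul_le_mul hs2 hg1 (abs_nonneg _) (by positivity))
    _ = ((M1 + M2) * (4 * Real.exp (2 * |t|)))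
        * (((K:ℝ) + 1) ^ 2 * (2 * |a|) ^ K / (K.factorial : ℝ)) := by
        rw [mul_pow]
        ring

/-- For all `t > 0` and `a ∈ ℝ`, the differential equation satisfied by
`a ∂_a p⁽²⁾(t,a)`, where `p⁽¹⁾, p⁽²⁾` are partial derivatives with respect to `t`. -/
theorem stmt13 (N NR : ℕ) (hN : 0 < N) (hNNR : N ≤ NR) :
    ∀ t : ℝ, 0 < t → ∀ a : ℝ,
      a * deriv (fun a' => iteratedDeriv 2 (fun t' => pdfZF N NR t' a') t) a =
        (-2 + (NR : ℝ)
            + (-4 + 4 * (N : ℝ) + 2 * (NR : ℝ) + a - 2 * (N : ℝ) * (NR : ℝ)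
                - (N : ℝ) * a) / t
            + (-4 + 6 * (N : ℝ) + 2 * (NR : ℝ) + 2 * a - 3 * (N : ℝ) * (NR : ℝ)
                - 3 * (N : ℝ) * a + (N : ℝ) ^ 2 * (NR : ℝ) + (N : ℝ) ^ 2 * a
                - 2 * (N : ℝ) ^ 2) / t ^ 2)
            * pdfZF N NR t a
          + (3 * (N : ℝ) - 4 + a - t + (-6 - 3 * (N : ℝ) ^ 2 + 9 * (N : ℝ)) / t
              + (-4 + 8 * (N : ℝ) - 5 * (N : ℝ) ^ 2 + (N : ℝ) ^ 3) / t ^ 2)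
            * deriv (fun t' => pdfZF N NR t' a) t
          + (-1 + 2 * (N : ℝ) - (NR : ℝ) - a - t
              + (-2 - (N : ℝ) ^ 2 + 3 * (N : ℝ)) / t)
            * iteratedDeriv 2 (fun t' => pdfZF N NR t' a) t := by
  intro t ht a
  have htne : t ≠ 0 := ne_of_gt ht
  have hd1 : ∀ (a' : ℝ) (s : ℝ), HasDerivAt (fun t' => pdfZF N NR t' a')
      (∑' n, Acoef N NR a' n * gg1 N n s) s := by
    intro a' s
    have hfun : (fun t' => pdfZF N NR t' a')
        = (fun t' => ∑' n, Acoef N NR a' n * gg0 N n t') :=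
      funext fun s' => pdf_eq hN s' a'
    rw [hfun]
    exact tsum_hasDerivAt_t hN hNNR a' (gg0 N) (gg1 N) 4 (by norm_num)
      (fun n y => gg0_hasDerivAt N n y) (fun n y => gg0_abs_le N n y)
      (fun n y => gg1_abs_le N n y) s
  have hd2 : ∀ (a' : ℝ) (s : ℝ),
      HasDerivAt (fun t' => ∑' n, Acoef N NR a' n * gg1 N n t')
        (∑' n, Acoef N NR a' n * gg2 N n s) s := fun a' s =>
    tsum_hasDerivAt_t hN hNNR a' (gg1 N) (gg2 N) 4 (by norm_num)
      (fun n y => gg1_hasDerivAt N n y) (fun n y => gg1_abs_le N n y)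
      (fun n y => gg2_abs_le N n y) s
  have hIter : ∀ (a' : ℝ), iteratedDeriv 2 (fun t' => pdfZF N NR t' a') t
      = ∑' n, Acoef N NR a' n * gg2 N n t := by
    intro a'
    have hder : deriv (fun t' => pdfZF N NR t' a')
        = fun s => ∑' n, Acoef N NR a' n * gg1 N n s := funext fun s => (hd1 a' s).deriv
    rw [show (2:ℕ) = 1 + 1 from rfl, iteratedDeriv_succ, iteratedDeriv_one, hder]
    exact (hd2 a' t).deriv
  have hDeriv1 : deriv (fun t' => pdfZF N NR t' a) t = ∑' n, Acoef N NR a n * gg1 N n t :=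
    (hd1 a t).deriv
  have hfun2 : (fun a' => iteratedDeriv 2 (fun t' => pdfZF N NR t' a') t)
      = fun a' => ∑' n, Acoef N NR a' n * gg2 N n t := funext hIter
  rw [hfun2, (tsum_hasDerivAt_a hN hNNR t a).deriv, hIter a, hDeriv1, pdf_eq hN t a]
  have hLHS : a * ∑' n, ((poch N n / poch NR n) * ((n:ℝ) * a ^ (n - 1)) / (n.factorial : ℝ))
        * gg2 N n t
      = ∑' n : ℕ, (n:ℝ) * Acoef N NR a n * gg2 N n t := by
    rw [← tsum_mul_left]
    apply tsum_congr
    intro n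
    rw [← mul_assoc, a_mul_Aderiv N NR a n]
  rw [hLHS]
  -- summability facts
  have Sg0 : Summable (fun n => Acoef N NR a n * gg0 N n t) :=
    summable_AW hN hNNR a 4 (Real.exp (2 * |t|)) (by norm_num) (le_of_lt (Real.exp_pos _))
      (fun n => gg0 N n t) (fun n => gg0_abs_le N n t)
  have Sg1 : Summable (fun n => Acoef N NR a n * gg1 N n t) :=
    summable_AW hN hNNR a 4 (Real.exp (2 * |t|)) (by norm_num) (le_of_lt (Real.exp_pos _))
      (fun n => gg1 N n t) (fun n => gg1_abs_le N n t)
  have Sg2 : Summable (fun n => Acoef N NR a n * gg2 N n t) :=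
    summable_AW hN hNNR a 4 (Real.exp (2 * |t|)) (by norm_num) (le_of_lt (Real.exp_pos _))
      (fun n => gg2 N n t) (fun n => gg2_abs_le N n t)
  have SnG2 : Summable (fun n : ℕ => (n:ℝ) * Acoef N NR a n * gg2 N n t) := by
    apply summable_of_bound _ (4 * Real.exp (2 * |t|)) (2 * |a|)
    intro n
    calc |(n:ℝ) * Acoef N NR a n * gg2 N n t|
        = (n:ℝ) * (|Acoef N NR a n| * |gg2 N n t|) := by
          rw [abs_mul, abs_mul, Nat.abs_cast, mul_assoc]
      _ ≤ (n:ℝ) * ((|a| ^ n / (n.factorial : ℝ)) * (4 * 2 ^ n * Real.exp (2 * |t|))) := by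
          apply mul_le_mul_of_nonneg_left _ (Nat.cast_nonneg n)
          exact mul_le_mul (Acoef_abs_le hN hNNR a n) (gg2_abs_le N n t) (abs_nonneg _)
            (by positivity)
      _ ≤ (4 * Real.exp (2 * |t|)) * (((n:ℝ) + 1) ^ 2 * (2 * |a|) ^ n / (n.factorial : ℝ)) := by
          have e2 : (n:ℝ) ≤ ((n:ℝ) + 1) ^ 2 := by nlinarith [Nat.cast_nonneg (α := ℝ) n]
          have e3 : (0:ℝ) < (n.factorial : ℝ) := by positivity
          have lhs_eq : (n:ℝ) * ((|a| ^ n / (n.factorial : ℝ)) * (4 * 2 ^ n * Real.exp (2 * |t|)))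
              = ((n:ℝ) * |a| ^ n * (4 * 2 ^ n * Real.exp (2 * |t|))) / (n.factorial : ℝ) := by
            ring
          have rhs_eq : (4 * Real.exp (2 * |t|))
                * (((n:ℝ) + 1) ^ 2 * (2 * |a|) ^ n / (n.factorial : ℝ))
              = (4 * Real.exp (2 * |t|) * (((n:ℝ) + 1) ^ 2 * (2 * |a|) ^ n)) / (n.factorial : ℝ) := by
            ring
          rw [lhs_eq, rhs_eq, mul_pow]
          apply (div_le_div_iff_of_pos_right e3).mpr
          nlinarith [mul_le_mul_of_nonneg_right e2
            (show (0:ℝ) ≤ |a| ^ n * (4 * 2 ^ n * Real.exp (2 * |t|)) by positivity)]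
  -- abbreviate the three coefficients
  set c0 : ℝ := -2 + (NR : ℝ)
      + (-4 + 4 * (N : ℝ) + 2 * (NR : ℝ) + a - 2 * (N : ℝ) * (NR : ℝ) - (N : ℝ) * a) / t
      + (-4 + 6 * (N : ℝ) + 2 * (NR : ℝ) + 2 * a - 3 * (N : ℝ) * (NR : ℝ) - 3 * (N : ℝ) * a
          + (N : ℝ) ^ 2 * (NR : ℝ) + (N : ℝ) ^ 2 * a - 2 * (N : ℝ) ^ 2) / t ^ 2 with hc0
  set c1 : ℝ := 3 * (N : ℝ) - 4 + a - t + (-6 - 3 * (N : ℝ) ^ 2 + 9 * (N : ℝ)) / t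
      + (-4 + 8 * (N : ℝ) - 5 * (N : ℝ) ^ 2 + (N : ℝ) ^ 3) / t ^ 2 with hc1
  set c2 : ℝ := -1 + 2 * (N : ℝ) - (NR : ℝ) - a - t
      + (-2 - (N : ℝ) ^ 2 + 3 * (N : ℝ)) / t with hc2
  -- telescoping
  have hE : ∀ n : ℕ, (n:ℝ) * Acoef N NR a n * gg2 N n t
      - (c0 * (Acoef N NR a n * gg0 N n t) + c1 * (Acoef N NR a n * gg1 N n t)
        + c2 * (Acoef N NR a n * gg2 N n t))
      = SS N NR t a (n + 1) - SS N NR t a n := by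
    intro n
    have h := Ekey hN hNNR htne a n
    rw [hc0, hc1, hc2]
    linear_combination h
  have hSummE : Summable (fun n : ℕ => (n:ℝ) * Acoef N NR a n * gg2 N n t
      - (c0 * (Acoef N NR a n * gg0 N n t) + c1 * (Acoef N NR a n * gg1 N n t)
        + c2 * (Acoef N NR a n * gg2 N n t))) :=
    SnG2.sub (((Sg0.mul_left c0).add (Sg1.mul_left c1)).add (Sg2.mul_left c2))
  have htsumE : ∑' n : ℕ, ((n:ℝ) * Acoef N NR a n * gg2 N n t
      - (c0 * (Acoef N NR a n * gg0 N n t) + c1 * (Acoef N NR a n * gg1 N n t)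
        + c2 * (Acoef N NR a n * gg2 N n t)))
      = (∑' n : ℕ, (n:ℝ) * Acoef N NR a n * gg2 N n t)
        - (c0 * (∑' n, Acoef N NR a n * gg0 N n t) + c1 * (∑' n, Acoef N NR a n * gg1 N n t)
          + c2 * (∑' n, Acoef N NR a n * gg2 N n t)) := by
    rw [SnG2.tsum_sub (((Sg0.mul_left c0).add (Sg1.mul_left c1)).add (Sg2.mul_left c2)),
      ((Sg0.mul_left c0).add (Sg1.mul_left c1)).tsum_add (Sg2.mul_left c2),
      (Sg0.mul_left c0).tsum_add (Sg1.mul_left c1),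
      tsum_mul_left, tsum_mul_left, tsum_mul_left]
  have hzero : ∑' n : ℕ, ((n:ℝ) * Acoef N NR a n * gg2 N n t
      - (c0 * (Acoef N NR a n * gg0 N n t) + c1 * (Acoef N NR a n * gg1 N n t)
        + c2 * (Acoef N NR a n * gg2 N n t))) = 0 := by
    have h1 := hSummE.hasSum.tendsto_sum_nat
    have h2 : ∀ K : ℕ, (∑ n ∈ Finset.range K, ((n:ℝ) * Acoef N NR a n * gg2 N n t
        - (c0 * (Acoef N NR a n * gg0 N n t) + c1 * (Acoef N NR a n * gg1 N n t)
          + c2 * (Acoef N NR a n * gg2 N n t)))) = SS N NR t a K := by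
      intro K
      rw [Finset.sum_congr rfl (fun n _ => hE n),
        Finset.sum_range_sub (fun n => SS N NR t a n), SS_zero hN htne a, sub_zero]
    simp only [h2] at h1
    have h3 : Filter.Tendsto (fun K => SS N NR t a K) Filter.atTop (nhds 0) := by
      apply squeeze_zero_norm (SS_bound hN hNNR htne a)
      exact ((summable_master (2 * |a|)).mul_left _).tendsto_atTop_zero
    exact tendsto_nhds_unique h1 h3
  linarith [htsumE, hzero]
end

section
/- Let N be a positive integer, let F : ℝ → ℝ be twice differentiable, let a ∈ ℝ with a ≠ 0, and define M(s, a) = (1 − s)^{−N} F(a s/(1 − s)) for s ≠ 1. Then for every s ≠ 1, F''(a s/(1 − s)) = ((1 − s)^{N+4}/a²) · ( ∂_s² M(s, a) − (2(N + 1)/(1 − s)) · ∂_s M(s, a) + (N(N + 1)/(1 − s)²) · M(s, a) ), where ∂_s denotes the partial derivative with respect to s. -/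
lemma aux16 (F : ℝ → ℝ) (hF : Differentiable ℝ F) (a : ℝ) (m : ℤ) (s : ℝ) (hs : s ≠ 1) :
    HasDerivAt (fun s' => (1 - s') ^ m * F (a * s' / (1 - s')))
      ((-(m : ℝ)) * (1 - s) ^ (m - 1) * F (a * s / (1 - s))
        + (1 - s) ^ m * deriv F (a * s / (1 - s)) * (a / (1 - s) ^ 2)) s := by
  have h0 : (1 : ℝ) - s ≠ 0 := sub_ne_zero.2 (Ne.symm hs)
  have hlin : HasDerivAt (fun s' : ℝ => 1 - s') (-1) s := by
    simpa using (hasDerivAt_id s).const_sub 1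
  have hpow : HasDerivAt (fun s' : ℝ => (1 - s') ^ m) ((-(m : ℝ)) * (1 - s) ^ (m - 1)) s := by
    have := (hasDerivAt_zpow m (1 - s) (Or.inl h0)).comp s hlin
    exact this.congr_deriv (by ring)
  have hg : HasDerivAt (fun s' : ℝ => a * s' / (1 - s')) (a / (1 - s) ^ 2) s := by
    have hnum : HasDerivAt (fun s' : ℝ => a * s') a s := by
      simpa using (hasDerivAt_id s).const_mul a
    have := hnum.div hlin h0
    exact this.congr_deriv (by field_simp; ring)
  have hFg : HasDerivAt (fun s' : ℝ => F (a * s' / (1 - s')))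
      (deriv F (a * s / (1 - s)) * (a / (1 - s) ^ 2)) s :=
    (hF.differentiableAt.hasDerivAt).comp s hg
  have := hpow.mul hFg
  exact this.congr_deriv (by ring)

set_option maxHeartbeats 1000000 in
/-- For `M(s,a) = (1−s)^{−N} F(as/(1−s))` with `F` twice differentiable and `a ≠ 0`:
`F''(as/(1−s)) = ((1−s)^{N+4}/a²) (∂_s² M − (2(N+1)/(1−s)) ∂_s M + (N(N+1)/(1−s)²) M)`
for every `s ≠ 1`. -/
theorem stmt16 (N : ℕ) (hN : 0 < N) (F : ℝ → ℝ)
    (hF : Differentiable ℝ F) (hF' : Differentiable ℝ (deriv F))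
    (a : ℝ) (ha : a ≠ 0) (M : ℝ → ℝ → ℝ)
    (hM : ∀ s a' : ℝ, M s a' = (1 - s) ^ (-(N : ℤ)) * F (a' * s / (1 - s))) :
    ∀ s : ℝ, s ≠ 1 →
      deriv (deriv F) (a * s / (1 - s)) =
        ((1 - s) ^ (N + 4) / a ^ 2) *
          (deriv (deriv (fun s' => M s' a)) s
            - (2 * ((N : ℝ) + 1) / (1 - s)) * deriv (fun s' => M s' a) s
            + ((N : ℝ) * ((N : ℝ) + 1) / (1 - s) ^ 2) * M s a) := by
  intro s hs
  have h0 : (1 : ℝ) - s ≠ 0 := sub_ne_zero.2 (Ne.symm hs)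
  have hMeq : (fun s' => M s' a) = fun s' => (1 - s') ^ (-(N : ℤ)) * F (a * s' / (1 - s')) :=
    funext fun s' => hM s' a
  set φ : ℝ → ℝ := fun s' => (N : ℝ) * ((1 - s') ^ (-(N : ℤ) - 1) * F (a * s' / (1 - s')))
      + a * ((1 - s') ^ (-(N : ℤ) - 2) * deriv F (a * s' / (1 - s'))) with hφdef
  have hder : ∀ t : ℝ, t ≠ 1 → HasDerivAt (fun s' => M s' a) (φ t) t := by
    intro t ht
    have h0t : (1 : ℝ) - t ≠ 0 := sub_ne_zero.2 (Ne.symm ht)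
    rw [hMeq]
    have h := aux16 F hF a (-(N : ℤ)) t ht
    convert h using 1
    simp only [hφdef, zpow_sub₀ h0t, zpow_one, zpow_ofNat]
    push_cast
    set A := F (a * t / (1 - t)) with hA
    set B := deriv F (a * t / (1 - t)) with hB
    clear_value A B
    generalize hx : (1 - t) = x at h0t ⊢
    field_simp
  have t1 := (aux16 F hF a (-(N : ℤ) - 1) s hs).const_mul (N : ℝ)
  have t2 := (aux16 (deriv F) hF' a (-(N : ℤ) - 2) s hs).const_mul a
  have hφder := t1.add t2
  have heq : deriv (fun s' => M s' a) =ᶠ[nhds s] φ := by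
    filter_upwards [isOpen_ne.mem_nhds hs] with t ht
    exact (hder t ht).deriv
  rw [heq.deriv_eq, (show HasDerivAt φ _ s from hφder).deriv, (hder s hs).deriv, hM s a]
  simp only [hφdef]
  have pw : ∀ m : ℤ, ∀ k : ℕ, m = -((N + k : ℕ) : ℤ) →
      (1 - s) ^ m = ((1 - s) ^ (N + k))⁻¹ := by
    intro m k hm
    rw [hm, zpow_neg, zpow_natCast]
  rw [show (-(N : ℤ) - 1 - 1) = -(N : ℤ) - 2 by ring,
      show (-(N : ℤ) - 2 - 1) = -(N : ℤ) - 3 by ring,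
      pw (-(N : ℤ)) 0 (by push_cast; ring), pw (-(N : ℤ) - 1) 1 (by push_cast; ring),
      pw (-(N : ℤ) - 2) 2 (by push_cast; ring), pw (-(N : ℤ) - 3) 3 (by push_cast; ring)]
  push_cast
  set A := F (a * s / (1 - s)) with hA
  set B := deriv F (a * s / (1 - s)) with hB
  set C := deriv (deriv F) (a * s / (1 - s)) with hC
  clear_value A B C
  generalize hx : (1 - s) = x at h0 ⊢
  field_simp
  ring
end
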